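/- arXiv:2204.03425 — 3 statements merged into one kernel-verified Lean document; each statement's English description precedes it below -/
import Mathlib

section
/- Let D > 0 and h > 0 be real numbers, let Λ : [0,1] → ℝ and ŝ : [0,1] → ℝ be continuous, let c : [0,1] → ℝ, and let F ∈ ℝ. Suppose that for every η ∈ [0,1] the function η ↦ c(η)·exp(−Λ(η)) is differentiable at η with derivative −(h/D)·exp(−Λ(η))·(F + ŝ(η)). Then ∫₀¹ exp(−Λ(η)) dη > 0 and F = −(D/h)·(c(1)·exp(−Λ(1)) − c(0)·exp(−Λ(0)))/∫₀¹ exp(−Λ(η)) dη − (∫₀¹ exp(−Λ(η))·ŝ(η) dη)/(∫₀¹ exp(−Λ(η)) dη). -/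
theorem integral_representation_of_flux (D h : ℝ) (hD : D > 0) (hh : h > 0)
    (Λ sHat c : ℝ → ℝ) (F : ℝ)
    (hΛ : ContinuousOn Λ (Set.Icc 0 1)) (hsHat : ContinuousOn sHat (Set.Icc 0 1))
    (hderiv : ∀ η ∈ Set.Icc (0:ℝ) 1,
      HasDerivWithinAt (fun t => c t * Real.exp (-Λ t))
        (-(h / D) * Real.exp (-Λ η) * (F + sHat η)) (Set.Icc 0 1) η) :
    (0 < ∫ η in (0:ℝ)..1, Real.exp (-Λ η)) ∧
    F = -(D / h) * (c 1 * Real.exp (-Λ 1) - c 0 * Real.exp (-Λ 0)) /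
          (∫ η in (0:ℝ)..1, Real.exp (-Λ η))
        - (∫ η in (0:ℝ)..1, Real.exp (-Λ η) * sHat η) /
          (∫ η in (0:ℝ)..1, Real.exp (-Λ η)) := by
  have hcontE : ContinuousOn (fun η => Real.exp (-Λ η)) (Set.Icc (0:ℝ) 1) :=
    (Real.continuous_exp.comp_continuousOn hΛ.neg)
  have hIntE : IntervalIntegrable (fun η => Real.exp (-Λ η)) MeasureTheory.volume 0 1 := by
    apply ContinuousOn.intervalIntegrable
    rwa [Set.uIcc_of_le (by norm_num : (0:ℝ) ≤ 1)]
  have hIntES : IntervalIntegrable (fun η => Real.exp (-Λ η) * sHat η) MeasureTheory.volume 0 1 := by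
    apply ContinuousOn.intervalIntegrable
    rw [Set.uIcc_of_le (by norm_num : (0:ℝ) ≤ 1)]
    exact hcontE.mul hsHat
  have hIpos : 0 < ∫ η in (0:ℝ)..1, Real.exp (-Λ η) := by
    apply intervalIntegral.intervalIntegral_pos_of_pos_on hIntE
    · intro x _; exact Real.exp_pos _
    · norm_num
  refine ⟨hIpos, ?_⟩
  -- FTC
  have hcontg : ContinuousOn (fun t => c t * Real.exp (-Λ t)) (Set.Icc (0:ℝ) 1) :=
    fun x hx => (hderiv x hx).continuousWithinAt
  have hftc : (∫ η in (0:ℝ)..1, -(h / D) * Real.exp (-Λ η) * (F + sHat η))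
      = c 1 * Real.exp (-Λ 1) - c 0 * Real.exp (-Λ 0) := by
    apply intervalIntegral.integral_eq_sub_of_hasDeriv_right_of_le (by norm_num) hcontg
    · intro x hx
      exact ((hderiv x (Set.mem_Icc_of_Ioo hx)).mono Set.Ioo_subset_Icc_self).hasDerivAt
        (Ioo_mem_nhds hx.1 hx.2) |>.hasDerivWithinAt
    · apply ContinuousOn.intervalIntegrable
      rw [Set.uIcc_of_le (by norm_num : (0:ℝ) ≤ 1)]
      exact ((continuousOn_const.mul hcontE).mul (continuousOn_const.add hsHat))
  have hsplit : (∫ η in (0:ℝ)..1, -(h / D) * Real.exp (-Λ η) * (F + sHat η))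
      = -(h / D) * (F * (∫ η in (0:ℝ)..1, Real.exp (-Λ η))
          + (∫ η in (0:ℝ)..1, Real.exp (-Λ η) * sHat η)) := by
    have : (∫ η in (0:ℝ)..1, -(h / D) * Real.exp (-Λ η) * (F + sHat η))
        = ∫ η in (0:ℝ)..1, -(h / D) * (F * Real.exp (-Λ η) + Real.exp (-Λ η) * sHat η) := by
      congr 1; ext η; ring
    rw [this, intervalIntegral.integral_const_mul,
      intervalIntegral.integral_add (hIntE.const_mul F) hIntES,
      intervalIntegral.integral_const_mul]
  rw [hsplit] at hftc
  have hI := hIpos.ne'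
  field_simp at hftc ⊢
  nlinarith [hftc, mul_pos hD hIpos, mul_pos hh hIpos]
end

section
/- Let Pe ≠ 0 be a real number and s₀, s₁ ∈ ℝ. Then (s₀·∫₀^{1/2} (η − 1/2)·exp(−Pe·(η − 1/2)) dη + s₁·∫_{1/2}¹ (η − 1/2)·exp(−Pe·(η − 1/2)) dη)/(∫₀¹ exp(−Pe·(η − 1/2)) dη) = W(Pe)·s₁ − W(−Pe)·s₀, where W(z) = (exp(z/2) − 1 − z/2)/(z·(exp(z) − 1)) for z ≠ 0. -/
/-- The function `W(z) = (exp(z/2) − 1 − z/2) / (z (exp z − 1))` (for `z ≠ 0`). -/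
noncomputable def Wfun (z : ℝ) : ℝ :=
  (Real.exp (z / 2) - 1 - z / 2) / (z * (Real.exp z - 1))

lemma exp_integral (Pe a b : ℝ) (hPe : Pe ≠ 0) :
    (∫ η in a..b, Real.exp (-Pe * (η - 1/2)))
      = (-Real.exp (-Pe * (b - 1/2)) / Pe) - (-Real.exp (-Pe * (a - 1/2)) / Pe) := by
  have h : ∀ η : ℝ, HasDerivAt (fun η => -Real.exp (-Pe * (η - 1/2)) / Pe)
      (Real.exp (-Pe * (η - 1/2))) η := by
    intro η
    have h1 : HasDerivAt (fun η : ℝ => -Pe * (η - 1/2)) (-Pe) η := by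
      have := ((hasDerivAt_id η).sub_const (1/2)).const_mul (-Pe)
      simp only [id, mul_one] at this
      exact this
    have h2 := (h1.exp).neg.div_const Pe
    refine h2.congr_deriv ?_
    field_simp
  rw [intervalIntegral.integral_eq_sub_of_hasDerivAt (fun η _ => h η)]
  exact (Real.continuous_exp.comp (by continuity)).intervalIntegrable a b

lemma poly_integral (Pe a b : ℝ) (hPe : Pe ≠ 0) :
    (∫ η in a..b, (η - 1/2) * Real.exp (-Pe * (η - 1/2)))
      = (-((b - 1/2)/Pe + 1/Pe^2) * Real.exp (-Pe * (b - 1/2)))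
        - (-((a - 1/2)/Pe + 1/Pe^2) * Real.exp (-Pe * (a - 1/2))) := by
  have h : ∀ η : ℝ, HasDerivAt (fun η => -((η - 1/2)/Pe + 1/Pe^2) * Real.exp (-Pe * (η - 1/2)))
      ((η - 1/2) * Real.exp (-Pe * (η - 1/2))) η := by
    intro η
    have h1 : HasDerivAt (fun η : ℝ => -Pe * (η - 1/2)) (-Pe) η := by
      have := ((hasDerivAt_id η).sub_const (1/2)).const_mul (-Pe)
      simp only [id, mul_one] at this
      exact this
    have h2 : HasDerivAt (fun η : ℝ => -((η - 1/2)/Pe + 1/Pe^2)) (-(1/Pe)) η := by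
      exact ((((hasDerivAt_id η).sub_const (1/2)).div_const Pe).add_const (1/Pe^2)).neg
    have h3 := h2.mul h1.exp
    refine h3.congr_deriv ?_
    have : Real.exp (-Pe * (η - 1/2)) ≠ 0 := Real.exp_ne_zero _
    field_simp
    ring
  rw [intervalIntegral.integral_eq_sub_of_hasDerivAt (fun η _ => h η)]
  exact (Continuous.mul (by continuity) (Real.continuous_exp.comp (by continuity))).intervalIntegrable a b

theorem inhomogeneous_flux_pwc (Pe s₀ s₁ : ℝ) (hPe : Pe ≠ 0) :
    (s₀ * (∫ η in (0:ℝ)..(1/2), (η - 1/2) * Real.exp (-Pe * (η - 1/2))) +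
      s₁ * (∫ η in (1/2:ℝ)..1, (η - 1/2) * Real.exp (-Pe * (η - 1/2)))) /
        (∫ η in (0:ℝ)..1, Real.exp (-Pe * (η - 1/2)))
      = Wfun Pe * s₁ - Wfun (-Pe) * s₀ := by
  rw [poly_integral Pe 0 (1/2) hPe, poly_integral Pe (1/2) 1 hPe, exp_integral Pe 0 1 hPe]
  unfold Wfun
  have e0 : -Pe * ((1:ℝ)/2 - 1/2) = 0 := by ring
  have e1 : -Pe * ((0:ℝ) - 1/2) = Pe/2 := by ring
  have e2 : -Pe * ((1:ℝ) - 1/2) = -(Pe/2) := by ring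
  rw [e0, e1, e2, Real.exp_zero]
  set u := Real.exp (Pe/2) with hu
  have hupos : 0 < u := Real.exp_pos _
  have hexpPe : Real.exp Pe = u^2 := by rw [hu, sq, ← Real.exp_add]; ring_nf
  have hexpnegPe : Real.exp (-Pe) = u⁻¹^2 := by
    rw [hu, ← Real.exp_neg, sq, ← Real.exp_add]; ring_nf
  have hexpneg2 : Real.exp (-(Pe/2)) = u⁻¹ := by rw [hu, ← Real.exp_neg]
  have hexpneg2' : Real.exp (-Pe/2) = u⁻¹ := by rw [show -Pe/2 = -(Pe/2) by ring, hexpneg2]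
  have hune : u ≠ 1 := by
    intro h; apply hPe
    have : Pe/2 = 0 := Real.exp_eq_exp.mp (by rw [← hu, h, Real.exp_zero])
    linarith
  have hu0 : u ≠ 0 := ne_of_gt hupos
  have hu2 : u^2 ≠ 1 := by
    intro h
    exact hune (by nlinarith)
  rw [hexpPe, hexpneg2, hexpneg2']
  have hexpnegPe' : Real.exp (-Pe) = u⁻¹^2 := hexpnegPe
  rw [hexpnegPe']
  have hiu2 : u⁻¹^2 - 1 ≠ 0 := by
    intro h
    apply hu2
    have : u⁻¹^2 = 1 := by linarith
    field_simp at this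
    nlinarith [this]
  have hu2' : u^2 - 1 ≠ 0 := sub_ne_zero.mpr hu2
  have hden : (-u⁻¹ / Pe) - (-u / Pe) ≠ 0 := by
    rw [div_sub_div_same]
    apply div_ne_zero _ hPe
    intro h
    have : u⁻¹ = u := by linarith
    have : u^2 = 1 := by field_simp at this; nlinarith [this]
    exact hu2 this
  have hkey : -(Pe*u*2) + Pe*u^3*2 ≠ 0 := by
    have h : -(Pe*u*2) + Pe*u^3*2 = 2*Pe*u*(u^2-1) := by ring
    rw [h]
    exact mul_ne_zero (mul_ne_zero (mul_ne_zero two_ne_zero hPe) hu0) hu2'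
  clear hu e0 e1 e2 hexpPe hexpnegPe hexpneg2 hexpneg2' hexpnegPe'
  clear_value u
  have hrw : (u⁻¹ - 1 - -Pe/2) / (-Pe * (u⁻¹^2 - 1)) = (u - u^2 + Pe/2*u^2) / (Pe * (u^2 - 1)) := by
    rw [div_eq_div_iff (mul_ne_zero (neg_ne_zero.mpr hPe) hiu2) (mul_ne_zero hPe hu2')]
    field_simp
    ring
  rw [hrw, div_eq_iff hden]
  field_simp
  ring
end

section
/- The Bernoulli function B : ℝ → ℝ, defined by B(z) = z/(exp(z) − 1) for z ≠ 0 and B(0) = 1, is strictly decreasing on ℝ. -/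
/-- The Bernoulli function, extended continuously by `B(0) = 1`. -/
noncomputable def bernoulliB (z : ℝ) : ℝ :=
  if z = 0 then 1 else z / (Real.exp z - 1)

lemma bB_exp_sub_one_ne_zero {z : ℝ} (hz : z ≠ 0) : Real.exp z - 1 ≠ 0 := by
  simp [sub_eq_zero, Real.exp_eq_one_iff, hz]

lemma bB_key {z : ℝ} (hz : z ≠ 0) : Real.exp z * (1 - z) < 1 := by
  have h : 1 - z < Real.exp (-z) := by
    have := Real.add_one_lt_exp (neg_ne_zero.mpr hz)
    linarith
  have h2 := mul_lt_mul_of_pos_left h (Real.exp_pos z)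
  rwa [← Real.exp_add, add_neg_cancel, Real.exp_zero] at h2

lemma bB_hasDeriv {z : ℝ} (hz : z ≠ 0) :
    HasDerivAt (fun z => z / (Real.exp z - 1))
      ((Real.exp z - 1 - z * Real.exp z) / (Real.exp z - 1) ^ 2) z := by
  have h1 : HasDerivAt (fun z : ℝ => z) 1 z := hasDerivAt_id z
  have h2 : HasDerivAt (fun z => Real.exp z - 1) (Real.exp z) z :=
    (Real.hasDerivAt_exp z).sub_const 1
  have h : HasDerivAt (fun z => z / (Real.exp z - 1)) _ z := h1.div h2 (bB_exp_sub_one_ne_zero hz)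
  convert h using 1
  ring

lemma bB_deriv_neg {z : ℝ} (hz : z ≠ 0) :
    deriv (fun z => z / (Real.exp z - 1)) z < 0 := by
  rw [(bB_hasDeriv hz).deriv]
  apply div_neg_of_neg_of_pos
  · nlinarith [bB_key hz]
  · exact sq_pos_of_ne_zero (bB_exp_sub_one_ne_zero hz)

lemma bB_anti_pos : StrictAntiOn (fun z => z / (Real.exp z - 1)) (Set.Ioi 0) := by
  apply strictAntiOn_of_deriv_neg (convex_Ioi 0)
  · intro z hz
    exact (bB_hasDeriv (ne_of_gt (Set.mem_Ioi.mp hz))).continuousAt.continuousWithinAt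
  · intro z hz
    rw [interior_Ioi] at hz
    exact bB_deriv_neg (ne_of_gt (Set.mem_Ioi.mp hz))

lemma bB_anti_neg : StrictAntiOn (fun z => z / (Real.exp z - 1)) (Set.Iio 0) := by
  apply strictAntiOn_of_deriv_neg (convex_Iio 0)
  · intro z hz
    exact (bB_hasDeriv (ne_of_lt (Set.mem_Iio.mp hz))).continuousAt.continuousWithinAt
  · intro z hz
    rw [interior_Iio] at hz
    exact bB_deriv_neg (ne_of_lt (Set.mem_Iio.mp hz))

lemma bB_lt_one {z : ℝ} (hz : 0 < z) : bernoulliB z < 1 := by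
  rw [bernoulliB, if_neg hz.ne']
  have h := Real.add_one_lt_exp hz.ne'
  rw [div_lt_one (by linarith)]
  linarith

lemma bB_one_lt {z : ℝ} (hz : z < 0) : 1 < bernoulliB z := by
  rw [bernoulliB, if_neg (ne_of_lt hz)]
  have h := Real.add_one_lt_exp (ne_of_lt hz)
  have hb : Real.exp z - 1 < 0 := by
    have := Real.exp_lt_one_iff.mpr hz  -- check name
    linarith
  rw [one_lt_div_of_neg hb]
  linarith

theorem bernoulliB_strictAnti : StrictAnti bernoulliB := by
  intro x y hxy
  rcases lt_trichotomy x 0 with hx | hx | hx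
  · rcases lt_trichotomy y 0 with hy | hy | hy
    · have := bB_anti_neg hx hy hxy
      simpa [bernoulliB, if_neg (ne_of_lt hx), if_neg (ne_of_lt hy)] using this
    · rw [hy, show bernoulliB 0 = 1 from if_pos rfl]; exact bB_one_lt hx
    · exact (bB_lt_one hy).trans (bB_one_lt hx)
  · rw [hx, show bernoulliB 0 = 1 from if_pos rfl]
    exact bB_lt_one (hx ▸ hxy)
  · have hy : 0 < y := hx.trans hxy
    have := bB_anti_pos hx hy hxy
    simpa [bernoulliB, if_neg (ne_of_gt hx), if_neg (ne_of_gt hy)] using this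
end
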